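/- Let V be a real inner product space and let α₁, α₂, ᾱ₃, α₄, β₁, β₂, β₃ ∈ V satisfy: ⟪α₁,α₁⟫ = ⟪β₁,β₁⟫ = ⟪α₂,α₂⟫ = ⟪β₃,β₃⟫ = ⟪α₄,α₄⟫ = 2; ⟪α₁,β₁⟫ = −1, ⟪β₁,α₂⟫ = −1, ⟪α₂,β₃⟫ = −1, ⟪β₃,α₄⟫ = −1, and all other inner products among α₁, β₁, α₂, β₃, α₄ vanish; ⟪β₁,ᾱ₃⟫ + ⟪β₃,ᾱ₃⟫ = 0 and ⟪α₁,ᾱ₃⟫ = ⟪α₂,ᾱ₃⟫ = ⟪α₄,ᾱ₃⟫ = 0; ⟪α₂,β₂⟫ + ⟪α₄,β₂⟫ = 0 and ⟪α₁,β₂⟫ = ⟪β₁,β₂⟫ = ⟪β₃,β₂⟫ = 0 (the relevant Gram relations of the Carter diagram E₇(a₃)). Set β₄ := −(α₄ + β₃ + α₂ + β₁ + α₁). Then ⟪β₄,β₄⟫ = 2, ⟪β₄,α₁⟫ = −1, and β₄ is orthogonal to each of α₂, ᾱ₃, β₁, β₂, β₃ (the Gram relations of the Carter diagram E₇(a₁)).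 -/

import Mathlib

open scoped RealInnerProductSpace


theorem stmt6 {V : Type*} [NormedAddCommGroup V] [InnerProductSpace ℝ V]
    (α₁ α₂ αb₃ α₄ β₁ β₂ β₃ : V)
    (h0 : ⟪α₁, α₁⟫ = 2)
    (h1 : ⟪β₁, β₁⟫ = 2)
    (h2 : ⟪α₂, α₂⟫ = 2)
    (h3 : ⟪β₃, β₃⟫ = 2)
    (h4 : ⟪α₄, α₄⟫ = 2)
    (h5 : ⟪α₁, β₁⟫ = -1)
    (h6 : ⟪β₁, α₂⟫ = -1)
    (h7 : ⟪α₂, β₃⟫ = -1)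
    (h8 : ⟪β₃, α₄⟫ = -1)
    (h9 : ⟪α₁, α₂⟫ = 0)
    (h10 : ⟪α₁, β₃⟫ = 0)
    (h11 : ⟪α₁, α₄⟫ = 0)
    (h12 : ⟪β₁, β₃⟫ = 0)
    (h13 : ⟪β₁, α₄⟫ = 0)
    (h14 : ⟪α₂, α₄⟫ = 0)
    (h15 : ⟪β₁, αb₃⟫ + ⟪β₃, αb₃⟫ = 0)
    (h16 : ⟪α₁, αb₃⟫ = 0)
    (h17 : ⟪α₂, αb₃⟫ = 0)
    (h18 : ⟪α₄, αb₃⟫ = 0)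
    (h19 : ⟪α₂, β₂⟫ + ⟪α₄, β₂⟫ = 0)
    (h20 : ⟪α₁, β₂⟫ = 0)
    (h21 : ⟪β₁, β₂⟫ = 0)
    (h22 : ⟪β₃, β₂⟫ = 0)
    (β₄ : V) (hdef : β₄ = -(α₄ + β₃ + α₂ + β₁ + α₁)) :
    ⟪β₄, β₄⟫ = 2 ∧
    ⟪β₄, α₁⟫ = -1 ∧
    ⟪β₄, α₂⟫ = 0 ∧
    ⟪β₄, αb₃⟫ = 0 ∧
    ⟪β₄, β₁⟫ = 0 ∧
    ⟪β₄, β₂⟫ = 0 ∧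
    ⟪β₄, β₃⟫ = 0 := by
  subst hdef
  have c5 : ⟪β₁, α₁⟫ = (-1:ℝ) := by rw [real_inner_comm]; exact h5
  have c6 : ⟪α₂, β₁⟫ = (-1:ℝ) := by rw [real_inner_comm]; exact h6
  have c7 : ⟪β₃, α₂⟫ = (-1:ℝ) := by rw [real_inner_comm]; exact h7
  have c8 : ⟪α₄, β₃⟫ = (-1:ℝ) := by rw [real_inner_comm]; exact h8
  have c9 : ⟪α₂, α₁⟫ = (0:ℝ) := by rw [real_inner_comm]; exact h9
  have c10 : ⟪β₃, α₁⟫ = (0:ℝ) := by rw [real_inner_comm]; exact h10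
  have c11 : ⟪α₄, α₁⟫ = (0:ℝ) := by rw [real_inner_comm]; exact h11
  have c12 : ⟪β₃, β₁⟫ = (0:ℝ) := by rw [real_inner_comm]; exact h12
  have c13 : ⟪α₄, β₁⟫ = (0:ℝ) := by rw [real_inner_comm]; exact h13
  have c14 : ⟪α₄, α₂⟫ = (0:ℝ) := by rw [real_inner_comm]; exact h14
  refine ⟨?_, ?_, ?_, ?_, ?_, ?_, ?_⟩ <;>
    simp [inner_add_left, inner_add_right, inner_neg_left, inner_neg_right,
      h0, h1, h2, h3, h4, h5, h6, h7, h8, h9, h10, h11, h12, h13, h14,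
      h16, h17, h18, h20, h21, h22,
      c5, c6, c7, c8, c9, c10, c11, c12, c13, c14, -inner_self_eq_norm_sq_to_K,
        -real_inner_self_eq_norm_sq] <;> linarith
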